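/- Let k be a field of characteristic 2, G = ℤ/nℤ with 2 | n and generator g, and H = T(V) # kG with a·g = a, b·g = a+b, a and b (g,1)-skew-primitive. Then no nonzero linear combination λ·ba + μ·ab + ν·b² (λ, μ, ν ∈ k) is (g²,1)-skew-primitive in H; i.e., Δ(x) = x⊗1 + g²⊗x with x = λba + μab + νb² forces λ = μ = ν = 0. -/

import Mathlib

noncomputable section

open TensorProduct

variable (k : Type*) [Field k]

def gF : FreeAlgebra k (Fin 3) := FreeAlgebra.ι k 0

def aF : FreeAlgebra k (Fin 3) := FreeAlgebra.ι k 1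

def bF : FreeAlgebra k (Fin 3) := FreeAlgebra.ι k 2

/-- Relations of the smash product `T(V) # kG`, where `V = span(a,b)` with
`a·g = a`, `b·g = a + b`: namely `g^n = 1`, `ag = ga`, `bg = ga + gb`. -/
def relH (n : ℕ) : FreeAlgebra k (Fin 3) → FreeAlgebra k (Fin 3) → Prop :=
  fun x y =>
    (x = (gF k) ^ n ∧ y = 1) ∨
    (x = aF k * gF k ∧ y = gF k * aF k) ∨
    (x = bF k * gF k ∧ y = gF k * aF k + gF k * bF k)

/-- The smash product algebra `H₀ = T(V) # kG`. -/
abbrev H (n : ℕ) := RingQuot (relH k n)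

def gH (n : ℕ) : H k n := RingQuot.mkAlgHom k (relH k n) (gF k)

def aH (n : ℕ) : H k n := RingQuot.mkAlgHom k (relH k n) (aF k)

def bH (n : ℕ) : H k n := RingQuot.mkAlgHom k (relH k n) (bF k)

/-! ### Auxiliary material for the proof -/

/-- The representing matrix algebra. -/
abbrev MM := Matrix (Fin 2) (Fin 2) k

/-- Image of `g`. -/
def Gm : MM k := !![1, 1; 0, 1]

/-- Image of `b` (the image of `a` is `1`). -/
def Ym : MM k := !![0, 0; 1, 1]

/-- Entry functional on 2×2 matrices. -/
def ent (i j : Fin 2) : MM k →ₗ[k] k where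
  toFun M := M i j
  map_add' _ _ := rfl
  map_smul' _ _ := rfl

theorem no_skew_primitive_in_degree_two (n : ℕ) [CharP k 2]
    (hn : 0 < n) (h2n : 2 ∣ n)
    (Δ : H k n →ₐ[k] H k n ⊗[k] H k n)
    (hg : Δ (gH k n) = gH k n ⊗ₜ gH k n)
    (ha : Δ (aH k n) = aH k n ⊗ₜ 1 + gH k n ⊗ₜ aH k n)
    (hb : Δ (bH k n) = bH k n ⊗ₜ 1 + gH k n ⊗ₜ bH k n)
    (lam mu nu : k)
    (hx : Δ (lam • (bH k n * aH k n) + mu • (aH k n * bH k n) + nu • ((bH k n) ^ 2)) =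
      (lam • (bH k n * aH k n) + mu • (aH k n * bH k n) + nu • ((bH k n) ^ 2)) ⊗ₜ 1 +
      ((gH k n) ^ 2) ⊗ₜ
        (lam • (bH k n * aH k n) + mu • (aH k n * bH k n) + nu • ((bH k n) ^ 2))) :
    lam = 0 ∧ mu = 0 ∧ nu = 0 := by
  classical
  have h2 : (2 : k) = 0 := by
    have := CharP.cast_eq_zero k 2
    exact_mod_cast this
  have hG2 : Gm k * Gm k = 1 := by
    ext i j
    fin_cases i <;> fin_cases j <;>
      simp [Matrix.mul_apply, Fin.sum_univ_two, Gm, Matrix.one_apply] <;>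
      linear_combination h2
  have mYG : Ym k * Gm k = !![0, 0; 1, 0] := by
    ext i j
    fin_cases i <;> fin_cases j <;>
      simp [Matrix.mul_apply, Fin.sum_univ_two, Gm, Ym] <;>
      linear_combination h2
  have mGY : Gm k * Ym k = !![1, 1; 1, 1] := by
    ext i j
    fin_cases i <;> fin_cases j <;>
      simp [Matrix.mul_apply, Fin.sum_univ_two, Gm, Ym]
  have mYY : Ym k * Ym k = Ym k := by
    ext i j
    fin_cases i <;> fin_cases j <;>
      simp [Matrix.mul_apply, Fin.sum_univ_two, Ym]
  set φ₀ : FreeAlgebra k (Fin 3) →ₐ[k] MM k :=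
    FreeAlgebra.lift k (![Gm k, 1, Ym k] : Fin 3 → MM k) with hφ₀
  have hrel : ∀ ⦃x y : FreeAlgebra k (Fin 3)⦄, relH k n x y → φ₀ x = φ₀ y := by
    rintro x y (⟨rfl, rfl⟩ | ⟨rfl, rfl⟩ | ⟨rfl, rfl⟩)
    · obtain ⟨m, rfl⟩ := h2n
      simp only [gF, map_pow, map_one, hφ₀, FreeAlgebra.lift_ι_apply]
      show (Gm k) ^ (2 * m) = 1
      rw [pow_mul, pow_two, hG2, one_pow]
    · simp only [gF, aF, map_mul, hφ₀, FreeAlgebra.lift_ι_apply]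
      show (1 : MM k) * Gm k = Gm k * 1
      rw [one_mul, mul_one]
    · simp only [gF, aF, bF, map_mul, map_add, hφ₀, FreeAlgebra.lift_ι_apply]
      show Ym k * Gm k = Gm k * 1 + Gm k * Ym k
      rw [mul_one, mYG, mGY]
      ext i j
      fin_cases i <;> fin_cases j <;> simp [Gm] <;>
        first
          | rfl
          | linear_combination h2
          | linear_combination -h2
          | linear_combination 2 * h2
          | linear_combination (-2 : k) * h2
  set φ : H k n →ₐ[k] MM k := RingQuot.liftAlgHom k ⟨φ₀, hrel⟩ with hφ
  have φg : φ (gH k n) = Gm k := by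
    rw [gH, hφ, RingQuot.liftAlgHom_mkAlgHom_apply, hφ₀, gF, FreeAlgebra.lift_ι_apply]
    rfl
  have φa : φ (aH k n) = 1 := by
    rw [aH, hφ, RingQuot.liftAlgHom_mkAlgHom_apply, hφ₀, aF, FreeAlgebra.lift_ι_apply]
    rfl
  have φb : φ (bH k n) = Ym k := by
    rw [bH, hφ, RingQuot.liftAlgHom_mkAlgHom_apply, hφ₀, bF, FreeAlgebra.lift_ι_apply]
    rfl
  -- expand Δ in hx using that Δ is an algebra map
  simp only [map_add, map_smul, map_mul, map_pow, ha, hb] at hx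
  -- push the identity to the matrix algebra
  have key := congrArg (Algebra.TensorProduct.map φ φ) hx
  simp only [map_add, map_smul, map_mul, map_pow, Algebra.TensorProduct.map_tmul,
    map_one, φg, φa, φb, pow_two, mul_add, add_mul,
    Algebra.TensorProduct.tmul_mul_tmul, TensorProduct.add_tmul,
    TensorProduct.tmul_add, TensorProduct.smul_tmul', TensorProduct.tmul_smul,
    one_mul, mul_one, hG2, mYG, mGY, mYY] at key
  -- extract scalar identities via entry functionals
  have e1 := congrArg ((TensorProduct.lid k k).toLinearMap.comp
      (TensorProduct.map (ent k 0 1) (ent k 0 0))) key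
  have e2 := congrArg ((TensorProduct.lid k k).toLinearMap.comp
      (TensorProduct.map (ent k 1 0) (ent k 0 0))) key
  have e3 := congrArg ((TensorProduct.lid k k).toLinearMap.comp
      (TensorProduct.map (ent k 0 0) (ent k 1 0))) key
  have hent : ∀ i j (M : MM k), ent k i j M = M i j := fun _ _ _ => rfl
  simp only [map_add, map_smul, LinearMap.comp_apply, TensorProduct.map_tmul,
    LinearEquiv.coe_coe, TensorProduct.lid_tmul, smul_eq_mul, hent, Matrix.smul_apply, Ym, Gm,
    Matrix.one_fin_two,
    LinearMap.coe_mk, AddHom.coe_mk, Matrix.cons_val', Matrix.cons_val_zero,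
    Matrix.cons_val_one, Matrix.head_cons, Matrix.head_fin_const,
    Matrix.of_apply, Matrix.cons_val_fin_one, Matrix.empty_val'] at e1 e2 e3
  exact ⟨by linear_combination e2 - e1, by linear_combination e1,
    by linear_combination e3 - e2⟩
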